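/- Let F : ℝ × ℝ^d → ℝ^d be bounded and continuous, and let x : [a,s] → ℝ^d be a solution of ẋ(t) = F(t, x(t)). Then for every ε > 0 there exist τ ∈ (0, s−a) and ρ > 0 such that for every y with |x(s) − y| < ρ there exists a piecewise continuous control u : [a,s] → ℝ^d with |u(t)| < ε for all t, u ≡ 0 on [a, s−τ], and a solution x_ε : [a,s] → ℝ^d of ẋ_ε(t) = F(t, x_ε(t)) + u(t) satisfying x_ε = x on [a, s−τ] and x_ε(s) = y. -/

import Mathlib

open Metric Set
noncomputable section

/-- A function is piecewise continuous on a set if it is continuous there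
except possibly at finitely many points. -/
def PiecewiseContinuousOn {d : ℕ} (u : ℝ → EuclideanSpace ℝ (Fin d)) (s : Set ℝ) : Prop :=
  ∃ S : Finset ℝ, ContinuousOn u (s \ (S : Set ℝ))

set_option maxHeartbeats 2000000

/-- small-control endpoint adjustment for bounded continuous right-hand sides. -/
theorem endpoint_adjustment
    (d : ℕ) (hd : 1 ≤ d)
    (F : ℝ × EuclideanSpace ℝ (Fin d) → EuclideanSpace ℝ (Fin d))
    (hFc : Continuous F) (C : ℝ) (hFb : ∀ p, ‖F p‖ ≤ C)
    (a s : ℝ) (has : a < s)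
    (x : ℝ → EuclideanSpace ℝ (Fin d))
    (hx : ∀ t ∈ Icc a s, HasDerivAt x (F (t, x t)) t)
    (ε : ℝ) (hε : 0 < ε) :
    ∃ τ ∈ Ioo (0 : ℝ) (s - a), ∃ ρ > (0 : ℝ),
      ∀ y : EuclideanSpace ℝ (Fin d), ‖x s - y‖ < ρ →
        ∃ u : ℝ → EuclideanSpace ℝ (Fin d),
          PiecewiseContinuousOn u (Icc a s) ∧
          (∀ t, ‖u t‖ < ε) ∧
          (∀ t ∈ Icc a (s - τ), u t = 0) ∧
          ∃ xe : ℝ → EuclideanSpace ℝ (Fin d),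
            ContinuousOn xe (Icc a s) ∧
            (∃ S : Finset ℝ, ∀ t ∈ Icc a s \ (S : Set ℝ),
              HasDerivAt xe (F (t, xe t) + u t) t) ∧
            (∀ t ∈ Icc a (s - τ), xe t = x t) ∧
            xe s = y := by
  classical
  have hxcont : ContinuousOn x (Icc a s) := fun t ht =>
    (hx t ht).continuousAt.continuousWithinAt
  obtain ⟨M, hM⟩ := isCompact_Icc.exists_bound_of_continuousOn hxcont
  have hτpos : (0:ℝ) < (s - a) / 2 := by linarith
  set τ : ℝ := (s - a) / 2 with hτdef
  set m : ℝ := s - τ with hmdef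
  have ham : a < m := by rw [hmdef, hτdef]; linarith
  have hms : m < s := by rw [hmdef]; linarith
  set K : Set (ℝ × EuclideanSpace ℝ (Fin d)) :=
    (Icc a s) ×ˢ (closedBall (0 : EuclideanSpace ℝ (Fin d)) (M + 1)) with hKdef
  have hK : IsCompact K := isCompact_Icc.prod (isCompact_closedBall _ _)
  obtain ⟨δ, hδpos, hδ⟩ := Metric.uniformContinuousOn_iff.mp
    (hK.uniformContinuousOn_of_continuous hFc.continuousOn) (ε / 2) (by linarith)
  set ρ : ℝ := min δ (min 1 (ε * τ / 2)) with hρdef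
  have hρpos : 0 < ρ := by
    refine lt_min hδpos (lt_min one_pos ?_); positivity
  refine ⟨τ, ⟨hτpos, by rw [hτdef]; linarith⟩, ρ, hρpos, ?_⟩
  intro y hy
  set v : EuclideanSpace ℝ (Fin d) := y - x s with hvdef
  have hvnorm : ‖v‖ < ρ := by rw [hvdef, norm_sub_rev]; exact hy
  have hvδ : ‖v‖ < δ := lt_of_lt_of_le hvnorm (min_le_left _ _)
  have hv1 : ‖v‖ < 1 := lt_of_lt_of_le hvnorm ((min_le_right _ _).trans (min_le_left _ _))
  have hvε : ‖v‖ < ε * τ / 2 :=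
    lt_of_lt_of_le hvnorm ((min_le_right _ _).trans (min_le_right _ _))
  set φ : ℝ → ℝ := fun t => min 1 (max 0 ((t - m) / τ)) with hφdef
  have hφcont : Continuous φ := by
    apply continuous_const.min
    exact continuous_const.max ((continuous_id.sub continuous_const).div_const τ)
  have hφ0 : ∀ t ≤ m, φ t = 0 := by
    intro t ht
    have h1 : (t - m) / τ ≤ 0 := div_nonpos_of_nonpos_of_nonneg (by linarith) hτpos.le
    simp [hφdef, max_eq_left h1]
  have hφnn : ∀ t, 0 ≤ φ t := fun t => le_min zero_le_one (le_max_left _ _)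
  have hφle : ∀ t, φ t ≤ 1 := fun t => min_le_left _ _
  have hφlin : ∀ t, m < t → t ≤ s → φ t = (t - m) / τ := by
    intro t h1 h2
    have hnn : 0 ≤ (t - m) / τ := div_nonneg (by linarith) hτpos.le
    have hle : (t - m) / τ ≤ 1 := by
      rw [div_le_one hτpos]; rw [hmdef] at h1 ⊢; linarith
    simp [hφdef, max_eq_right hnn, min_eq_right hle]
  have hφs : φ s = 1 := by
    rw [hφlin s hms le_rfl, hmdef]
    field_simp
    ring
  set xe : ℝ → EuclideanSpace ℝ (Fin d) := fun t => x t + φ t • v with hxedef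
  set u : ℝ → EuclideanSpace ℝ (Fin d) := fun t =>
    if t ∈ Ioo m s then (F (t, x t) - F (t, x t + φ t • v)) + τ⁻¹ • v else 0 with hudef
  have hφv : ∀ t, ‖φ t • v‖ ≤ ‖v‖ := by
    intro t
    rw [norm_smul, Real.norm_eq_abs, abs_of_nonneg (hφnn t)]
    nlinarith [hφle t, norm_nonneg v, hφnn t]
  have hub : ∀ t ∈ Ioo m s,
      ‖(F (t, x t) - F (t, x t + φ t • v)) + τ⁻¹ • v‖ < ε := by
    intro t ht
    have htIcc : t ∈ Icc a s := ⟨(ham.trans ht.1).le, ht.2.le⟩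
    have hxn : ‖x t‖ ≤ M := hM t htIcc
    have hp : (t, x t) ∈ K := by
      refine ⟨htIcc, ?_⟩
      rw [mem_closedBall_zero_iff]; linarith
    have hq : (t, x t + φ t • v) ∈ K := by
      refine ⟨htIcc, ?_⟩
      rw [mem_closedBall_zero_iff]
      have := norm_add_le (x t) (φ t • v)
      have := hφv t
      linarith
    have hdist : dist (t, x t) (t, x t + φ t • v) < δ := by
      rw [Prod.dist_eq]
      simp only [dist_self]
      rw [dist_self_add_right]
      have := hφv t
      have h0 : (0:ℝ) ≤ ‖φ t • v‖ := norm_nonneg _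
      rw [max_eq_right h0]
      linarith
    have h1 : ‖F (t, x t) - F (t, x t + φ t • v)‖ < ε / 2 := by
      rw [← dist_eq_norm]
      exact hδ _ hp _ hq hdist
    have h2 : ‖τ⁻¹ • v‖ < ε / 2 := by
      rw [norm_smul, Real.norm_eq_abs, abs_of_pos (inv_pos.mpr hτpos)]
      have hττ : τ * τ⁻¹ = 1 := mul_inv_cancel₀ hτpos.ne'
      nlinarith [hvε, hτpos, norm_nonneg v, inv_pos.mpr hτpos]
    calc ‖(F (t, x t) - F (t, x t + φ t • v)) + τ⁻¹ • v‖
        ≤ ‖F (t, x t) - F (t, x t + φ t • v)‖ + ‖τ⁻¹ • v‖ := norm_add_le _ _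
      _ < ε := by linarith
  have hu0 : ∀ t ∉ Ioo m s, u t = 0 := by
    intro t ht; rw [hudef]; simp only [ht, if_false]
  refine ⟨u, ?_, ?_, ?_, xe, ?_, ?_, ?_, ?_⟩
  · -- piecewise continuous
    refine ⟨{m, s}, ?_⟩
    intro t ht
    obtain ⟨htI, htS⟩ := ht
    simp only [Finset.coe_insert, Finset.coe_singleton, mem_insert_iff, mem_singleton_iff,
      not_or] at htS
    rcases lt_or_gt_of_ne htS.1 with hlt | hgt
    · have : ContinuousAt u t := by
        have hev : u =ᶠ[nhds t] (fun _ => 0) := by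
          filter_upwards [Iio_mem_nhds hlt] with t' ht'
          exact hu0 t' (fun h => absurd h.1 (not_lt.mpr (le_of_lt ht')))
        exact continuousAt_const.congr hev.symm
      exact this.continuousWithinAt
    · have hts : t < s := lt_of_le_of_ne htI.2 htS.2
      have htIoo : t ∈ Ioo m s := ⟨hgt, hts⟩
      have hxct : ContinuousAt x t := (hx t htI).continuousAt
      have hg : ContinuousAt (fun t' =>
          (F (t', x t') - F (t', x t' + φ t' • v)) + τ⁻¹ • v) t := by
        have h1 : ContinuousAt (fun t' => F (t', x t')) t :=
          hFc.continuousAt.comp (continuousAt_id.prodMk hxct)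
        have h2 : ContinuousAt (fun t' => F (t', x t' + φ t' • v)) t :=
          hFc.continuousAt.comp
            (continuousAt_id.prodMk (hxct.add (hφcont.continuousAt.smul continuousAt_const)))
        exact (h1.sub h2).add continuousAt_const
      have : ContinuousAt u t := by
        have hev : u =ᶠ[nhds t] (fun t' =>
            (F (t', x t') - F (t', x t' + φ t' • v)) + τ⁻¹ • v) := by
          filter_upwards [Ioo_mem_nhds hgt hts] with t' ht'
          rw [hudef]; simp only [ht', if_true]
        exact hg.congr hev.symm
      exact this.continuousWithinAt
  · -- norm bound
    intro t
    by_cases ht : t ∈ Ioo m s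
    · have : u t = (F (t, x t) - F (t, x t + φ t • v)) + τ⁻¹ • v := by
        rw [hudef]; simp only [ht, if_true]
      rw [this]; exact hub t ht
    · rw [hu0 t ht]; simpa using hε
  · -- zero on initial segment
    intro t ht
    exact hu0 t (fun h => absurd h.1 (not_lt.mpr ht.2))
  · -- continuity of xe
    exact hxcont.add ((hφcont.smul continuous_const).continuousOn)
  · -- derivative
    refine ⟨{m, s}, ?_⟩
    intro t ht
    obtain ⟨htI, htS⟩ := ht
    simp only [Finset.coe_insert, Finset.coe_singleton, mem_insert_iff, mem_singleton_iff,
      not_or] at htS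
    rcases lt_or_gt_of_ne htS.1 with hlt | hgt
    · have hu : u t = 0 := hu0 t (fun h => absurd h.1 (not_lt.mpr hlt.le))
      have hxet : xe t = x t := by
        rw [hxedef]; simp [hφ0 t hlt.le]
      have hD : HasDerivAt xe (F (t, x t)) t := by
        apply (hx t htI).congr_of_eventuallyEq
        filter_upwards [Iio_mem_nhds hlt] with t' ht'
        rw [hxedef]; simp [hφ0 t' (le_of_lt ht')]
      rw [hxet, hu, add_zero]
      exact hD
    · have hts : t < s := lt_of_le_of_ne htI.2 htS.2
      have htIoo : t ∈ Ioo m s := ⟨hgt, hts⟩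
      have hlin : HasDerivAt (fun t' => x t' + ((t' - m) / τ) • v)
          (F (t, x t) + τ⁻¹ • v) t := by
        have h1 : HasDerivAt (fun t' : ℝ => (t' - m) / τ) (1 / τ) t :=
          ((hasDerivAt_id t).sub_const m).div_const τ
        have := (hx t htI).add (h1.smul_const v)
        simp only [one_div] at this
        exact this
      have hD : HasDerivAt xe (F (t, x t) + τ⁻¹ • v) t := by
        apply hlin.congr_of_eventuallyEq
        filter_upwards [Ioo_mem_nhds hgt hts] with t' ht'
        rw [hxedef]; simp [hφlin t' ht'.1 ht'.2.le]
      have hut : u t = (F (t, x t) - F (t, x t + φ t • v)) + τ⁻¹ • v := by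
        rw [hudef]; simp only [htIoo, if_true]
      have hxet : xe t = x t + φ t • v := rfl
      have heq : F (t, xe t) + u t = F (t, x t) + τ⁻¹ • v := by
        rw [hut, hxet]; abel
      rw [heq]
      exact hD
  · -- xe = x on initial segment
    intro t ht
    show x t + φ t • v = x t
    simp [hφ0 t ht.2]
  · -- xe s = y
    show x s + φ s • v = y
    rw [hφs, hvdef]; simp
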